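/- Let A be an ℕ-graded ring with degree-zero subring A₀, and P a finitely generated ℤ-graded projective right A-module with T(P) = P/P·A₊. For each λ ∈ ℤ there is an isomorphism of graded A-modules F^λP ≅ ⊕_{κ ≤ λ} T(P)_κ ⊗_{A₀} A(−κ), where A(−κ) denotes A with grading shifted by −κ and T(P)_κ is viewed as a graded A₀-module concentrated in degree 0 on the left factor. -/

import Mathlib

universe u

/-- The submodule `P·A₊` (for left modules: `A₊·P`), `A₊ = ⊕_{n>0} A_n`. -/
def posSMulSubmodule {A : Type u} [Ring A] (𝒜 : ℤ → AddSubgroup A)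
    (P : Type u) [AddCommGroup P] [Module A P] : Submodule A P :=
  Submodule.span A {x : P | ∃ n : ℤ, 0 < n ∧ ∃ a ∈ 𝒜 n, ∃ p : P, x = a • p}

/-- The degree-`κ` component of `T(P) = P/P·A₊` as an `A₀`-module (the image of `P_κ`). -/
def TSub {A : Type u} [Ring A] (𝒜 : ℤ → AddSubgroup A) (A₀ : Subring A)
    (P : Type u) [AddCommGroup P] [Module A P] (ℳ : ℤ → AddSubgroup P) (κ : ℤ) :
    Submodule A₀ (P ⧸ posSMulSubmodule 𝒜 P) :=
  Submodule.span A₀ ((Submodule.Quotient.mk : P → P ⧸ posSMulSubmodule 𝒜 P) '' (ℳ κ : Set P))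

set_option maxHeartbeats 1000000
set_option synthInstance.maxHeartbeats 200000

open DirectSum

namespace FiltIso

-- chunk 1 assumed 
section dcomp
variable {M : Type u} [AddCommGroup M] (ℬ : ℤ → AddSubgroup M) [DirectSum.Decomposition ℬ]
noncomputable def dcomp (n : ℤ) (x : M) : M := ((DirectSum.decompose ℬ x) n : M)
noncomputable def dcompHom (n : ℤ) : M →+ M :=
  AddMonoidHom.mk' (dcomp ℬ n) (by intro x y; simp [dcomp, DirectSum.decompose_add])
lemma dcompHom_apply (n : ℤ) (x : M) : dcompHom ℬ n x = dcomp ℬ n x := rfl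
lemma dcomp_mem (n : ℤ) (x : M) : dcomp ℬ n x ∈ ℬ n := SetLike.coe_mem _
lemma dcomp_add (n : ℤ) (x y : M) :
    dcomp ℬ n (x + y) = dcomp ℬ n x + dcomp ℬ n y := (dcompHom ℬ n).map_add x y
lemma dcomp_zero (n : ℤ) : dcomp ℬ n (0 : M) = 0 := (dcompHom ℬ n).map_zero
lemma dcomp_neg (n : ℤ) (x : M) : dcomp ℬ n (-x) = - dcomp ℬ n x := (dcompHom ℬ n).map_neg x
lemma dcomp_sub (n : ℤ) (x y : M) :
    dcomp ℬ n (x - y) = dcomp ℬ n x - dcomp ℬ n y := (dcompHom ℬ n).map_sub x y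
lemma dcomp_of_mem_same {n : ℤ} {x : M} (hx : x ∈ ℬ n) : dcomp ℬ n x = x :=
  DirectSum.decompose_of_mem_same ℬ hx
lemma dcomp_of_mem_ne {n m : ℤ} {x : M} (hx : x ∈ ℬ n) (h : n ≠ m) : dcomp ℬ m x = 0 :=
  DirectSum.decompose_of_mem_ne ℬ hx h
lemma dcomp_finsum (x : M) : ∃ s : Finset ℤ,
    (∀ n ∉ s, dcomp ℬ n x = 0) ∧ x = ∑ n ∈ s, dcomp ℬ n x := by
  classical
  refine ⟨(DirectSum.decompose ℬ x).support, fun n hn => ?_, ?_⟩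
  · simp only [dcomp]
    rw [DFinsupp.notMem_support_iff.mp hn]
    rfl
  · exact (DirectSum.sum_support_decompose ℬ x).symm
end dcomp
section smul
variable {A : Type u} [Ring A] (𝒜 : ℤ → AddSubgroup A) [GradedRing 𝒜]
variable {M : Type u} [AddCommGroup M] [Module A M] (ℬ : ℤ → AddSubgroup M)
  [DirectSum.Decomposition ℬ]
omit [GradedRing 𝒜] in
lemma dcomp_smul (hsm : ∀ ⦃i j : ℤ⦄ ⦃a : A⦄ ⦃x : M⦄, a ∈ 𝒜 i → x ∈ ℬ j → a • x ∈ ℬ (i + j))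
    {m : ℤ} {a : A} (ha : a ∈ 𝒜 m) (n : ℤ) (x : M) :
    dcomp ℬ n (a • x) = a • dcomp ℬ (n - m) x := by
  induction x using DirectSum.Decomposition.inductionOn ℬ with
  | zero => simp [dcomp_zero]
  | @homogeneous j y =>
    have h2 : a • (y : M) ∈ ℬ (m + j) := hsm ha y.2
    by_cases h : m + j = n
    · subst h
      rw [dcomp_of_mem_same ℬ h2, show (m + j - m) = j by omega, dcomp_of_mem_same ℬ y.2]
    · rw [dcomp_of_mem_ne ℬ h2 h, dcomp_of_mem_ne ℬ y.2 (show j ≠ n - m by omega), smul_zero]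
  | add y z hy hz => rw [smul_add, dcomp_add, dcomp_add, hy, hz, smul_add]
lemma dcomp_mul {m : ℤ} {a : A} (ha : a ∈ 𝒜 m)
    (n : ℤ) (b : A) : dcomp 𝒜 n (a * b) = a * dcomp 𝒜 (n - m) b := by
  have := dcomp_smul 𝒜 𝒜 (fun i j a x hai hxj => SetLike.mul_mem_graded hai hxj) ha n b
  simpa [smul_eq_mul] using this
lemma dcomp_mul_right {m : ℤ} {a : A} (ha : a ∈ 𝒜 m) (n : ℤ) (b : A) :
    dcomp 𝒜 n (b * a) = dcomp 𝒜 (n - m) b * a := by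
  induction b using DirectSum.Decomposition.inductionOn 𝒜 with
  | zero => simp [dcomp_zero]
  | @homogeneous j y =>
    have h2 : (y : A) * a ∈ 𝒜 (j + m) := SetLike.mul_mem_graded y.2 ha
    by_cases h : j + m = n
    · subst h
      rw [dcomp_of_mem_same 𝒜 h2, show (j + m - m) = j by omega, dcomp_of_mem_same 𝒜 y.2]
    · rw [dcomp_of_mem_ne 𝒜 h2 h, dcomp_of_mem_ne 𝒜 y.2 (show j ≠ n - m by omega), zero_mul]
  | add y z hy hz => rw [add_mul, dcomp_add, dcomp_add, hy, hz, add_mul]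
end smul

-- ==================== chunk 2 ====================

section pos
variable {A : Type u} [Ring A] (𝒜 : ℤ → AddSubgroup A) [GradedRing 𝒜]
variable {P : Type u} [AddCommGroup P] [Module A P]

/-- generators of `posSMulSubmodule` -/
def posGen : Set P := {x : P | ∃ n : ℤ, 0 < n ∧ ∃ a ∈ 𝒜 n, ∃ p : P, x = a • p}

lemma pos_smul_mem {n : ℤ} (hn : 0 < n) {a : A} (ha : a ∈ 𝒜 n) (p : P) :
    a • p ∈ posSMulSubmodule 𝒜 P := Submodule.subset_span ⟨n, hn, a, ha, p, rfl⟩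

variable (P) in
/-- additive closure of the generators -/
def posClosure : AddSubgroup P := AddSubgroup.closure (posGen 𝒜 (P := P))

lemma eq_zero_of_mem_neg (hsupp : ∀ n : ℤ, n < 0 → 𝒜 n = ⊥) {n : ℤ} (hn : n < 0) {a : A}
    (ha : a ∈ 𝒜 n) : a = 0 := by
  rw [hsupp n hn] at ha; exact ha

lemma smul_mem_posClosure (hsupp : ∀ n : ℤ, n < 0 → 𝒜 n = ⊥) (b : A) {x : P}
    (hx : x ∈ posClosure 𝒜 P) : b • x ∈ posClosure 𝒜 P := by
  induction hx using AddSubgroup.closure_induction with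
  | mem x hxg =>
    obtain ⟨n, hn, a, ha, p, rfl⟩ := hxg
    rw [smul_smul]
    obtain ⟨s, hs0, hsum⟩ := dcomp_finsum 𝒜 (b * a)
    rw [hsum, Finset.sum_smul]
    refine AddSubgroup.sum_mem _ (fun m _ => ?_)
    rcases le_or_gt m 0 with hm | hm
    · have : dcomp 𝒜 m (b * a) = dcomp 𝒜 (m - n) b * a := dcomp_mul_right 𝒜 ha m b
      rw [this, eq_zero_of_mem_neg 𝒜 hsupp (show m - n < 0 by omega) (dcomp_mem 𝒜 (m - n) b),
        zero_mul, zero_smul]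
      exact zero_mem _
    · exact AddSubgroup.subset_closure ⟨m, hm, _, dcomp_mem 𝒜 m (b * a), p, rfl⟩
  | zero => rw [smul_zero]; exact zero_mem _
  | add x y hx hy ihx ihy => rw [smul_add]; exact add_mem ihx ihy
  | neg x hx ihx => rw [smul_neg]; exact neg_mem ihx

lemma posSMul_le_posClosure (hsupp : ∀ n : ℤ, n < 0 → 𝒜 n = ⊥) {x : P}
    (hx : x ∈ posSMulSubmodule 𝒜 P) : x ∈ posClosure 𝒜 P := by
  induction hx using Submodule.span_induction with
  | mem x hxg => exact AddSubgroup.subset_closure hxg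
  | zero => exact zero_mem _
  | add x y _ _ ihx ihy => exact add_mem ihx ihy
  | smul a x _ ihx => exact smul_mem_posClosure 𝒜 hsupp a ihx

variable (ℳ : ℤ → AddSubgroup P) [DirectSum.Decomposition ℳ] [SetLike.GradedSMul 𝒜 ℳ]

lemma hsmM : ∀ ⦃i j : ℤ⦄ ⦃a : A⦄ ⦃x : P⦄, a ∈ 𝒜 i → x ∈ ℳ j → a • x ∈ ℳ (i + j) :=
  fun i j a x ha hx => by simpa using SetLike.GradedSMul.smul_mem (A := 𝒜) (B := ℳ) ha hx

lemma dcomp_mem_posSMul (hsupp : ∀ n : ℤ, n < 0 → 𝒜 n = ⊥) {y : P}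
    (hy : y ∈ posSMulSubmodule 𝒜 P) (n : ℤ) : dcomp ℳ n y ∈ posSMulSubmodule 𝒜 P := by
  have hy' := posSMul_le_posClosure 𝒜 hsupp hy
  clear hy
  induction hy' using AddSubgroup.closure_induction with
  | mem x hxg =>
    obtain ⟨k, hk, a, ha, p, rfl⟩ := hxg
    rw [dcomp_smul 𝒜 ℳ (hsmM 𝒜 ℳ) ha]
    exact pos_smul_mem 𝒜 hk ha _
  | zero => rw [dcomp_zero]; exact zero_mem _
  | add x y hx hy ihx ihy => rw [dcomp_add]; exact add_mem ihx ihy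
  | neg x hx ihx => rw [dcomp_neg]; exact neg_mem ihx

/-- below some degree everything vanishes -/
lemma exists_bound [Module.Finite A P] (hsupp : ∀ n : ℤ, n < 0 → 𝒜 n = ⊥) :
    ∃ n₀ : ℤ, ∀ ω : ℤ, ω < n₀ → ∀ p ∈ ℳ ω, p = (0 : P) := by
  classical
  obtain ⟨s, hs⟩ := Module.Finite.fg_top (R := A) (M := P)
  set D : Finset ℤ := s.biUnion (fun p => (DirectSum.decompose ℳ p).support) with hD
  obtain ⟨b, hb⟩ := (D.image (fun n => -n)).exists_le
  set n₀ : ℤ := -b with hn₀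
  have hgen : ∀ p ∈ (s : Set P), ∀ ω : ℤ, ω < n₀ → dcomp ℳ ω p = 0 := by
    intro p hp ω hω
    by_cases hmem : ω ∈ (DirectSum.decompose ℳ p).support
    · exfalso
      have : ω ∈ D := Finset.mem_biUnion.mpr ⟨p, hp, hmem⟩
      have := hb (-ω) (Finset.mem_image_of_mem _ this)
      omega
    · simp only [dcomp]
      rw [DFinsupp.notMem_support_iff.mp hmem]; rfl
  -- the set of p all of whose low components vanish is a submodule
  set Q : Submodule A P :=
    { carrier := {p : P | ∀ ω : ℤ, ω < n₀ → dcomp ℳ ω p = 0}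
      add_mem' := by
        intro p q hp hq ω hω
        rw [dcomp_add, hp ω hω, hq ω hω, add_zero]
      zero_mem' := by intro ω hω; rw [dcomp_zero]
      smul_mem' := by
        intro a p hp ω hω
        obtain ⟨sa, hsa0, hsum⟩ := dcomp_finsum 𝒜 a
        conv_lhs => rw [hsum]
        rw [Finset.sum_smul, ← dcompHom_apply, map_sum]
        refine Finset.sum_eq_zero (fun m _ => ?_)
        rw [dcompHom_apply, dcomp_smul 𝒜 ℳ (hsmM 𝒜 ℳ) (dcomp_mem 𝒜 m a)]
        rcases lt_or_ge m 0 with hm | hm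
        · rw [eq_zero_of_mem_neg 𝒜 hsupp hm (dcomp_mem 𝒜 m a), zero_smul]
        · rw [hp (ω - m) (by omega), smul_zero] } with hQ
  have : Q = ⊤ := by
    rw [← hs]
    refine le_antisymm ?_ (Submodule.span_le.mpr (fun p hp ω hω => hgen p hp ω hω))
    rw [hs]; exact le_top
  refine ⟨n₀, fun ω hω p hp => ?_⟩
  have hpQ : p ∈ Q := this ▸ Submodule.mem_top
  rw [← dcomp_of_mem_same ℳ hp, hpQ ω hω]

end pos
-- ==================== chunk 3 ====================

section sec
variable {A : Type u} [Ring A] (𝒜 : ℤ → AddSubgroup A) [GradedRing 𝒜]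
variable {P : Type u} [AddCommGroup P] [Module A P] (ℳ : ℤ → AddSubgroup P)
  [DirectSum.Decomposition ℳ] [SetLike.GradedSMul 𝒜 ℳ]
variable (A₀ : Subring A)

local notation "mkp" => (Submodule.Quotient.mk : P → P ⧸ posSMulSubmodule 𝒜 P)

lemma coe_mem_zero (hA₀ : (A₀ : Set A) = (𝒜 0 : Set A)) (a : A₀) : (a : A) ∈ 𝒜 0 := by
  have h : (a : A) ∈ (A₀ : Set A) := a.2
  rwa [hA₀] at h

lemma smul_mem_deg (hA₀ : (A₀ : Set A) = (𝒜 0 : Set A)) (a : A₀) {κ : ℤ} {p : P}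
    (hp : p ∈ ℳ κ) : (a : A) • p ∈ ℳ κ := by
  simpa using hsmM 𝒜 ℳ (coe_mem_zero 𝒜 A₀ hA₀ a) hp

lemma mk_mem_TSub {κ : ℤ} {p : P} (hp : p ∈ ℳ κ) : mkp p ∈ TSub 𝒜 A₀ P ℳ κ :=
  Submodule.subset_span ⟨p, hp, rfl⟩

lemma TSub_exists_rep (hA₀ : (A₀ : Set A) = (𝒜 0 : Set A)) {κ : ℤ}
    {t : P ⧸ posSMulSubmodule 𝒜 P} (ht : t ∈ TSub 𝒜 A₀ P ℳ κ) :
    ∃ p, p ∈ ℳ κ ∧ mkp p = t := by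
  induction ht using Submodule.span_induction with
  | mem x hx => obtain ⟨p, hp, rfl⟩ := hx; exact ⟨p, hp, rfl⟩
  | zero => exact ⟨0, zero_mem _, rfl⟩
  | add x y _ _ ihx ihy =>
    obtain ⟨p, hp, rfl⟩ := ihx
    obtain ⟨q, hq, rfl⟩ := ihy
    exact ⟨p + q, add_mem hp hq, rfl⟩
  | smul a x _ ihx =>
    obtain ⟨p, hp, rfl⟩ := ihx
    refine ⟨(a : A) • p, smul_mem_deg 𝒜 ℳ A₀ hA₀ a hp, ?_⟩
    rfl

variable {σ : P →ₗ[A] (P →₀ A)}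
  (hσ : ∀ p : P, Finsupp.linearCombination A (id : P → P) (σ p) = p)

variable (σ) in
/-- homogeneous `A₀`-linear partial section of the quotient map, degree `κ` -/
noncomputable def gsec (κ : ℤ) (p : P) : P :=
  (σ p).sum fun x a => dcomp ℳ κ (dcomp 𝒜 0 a • x)

lemma gsec_zero_fun (κ : ℤ) (x : P) : dcomp ℳ κ (dcomp 𝒜 0 (0 : A) • x) = 0 := by
  rw [dcomp_zero, zero_smul, dcomp_zero]

lemma gsec_add (κ : ℤ) (p q : P) :
    gsec 𝒜 ℳ σ κ (p + q) = gsec 𝒜 ℳ σ κ p + gsec 𝒜 ℳ σ κ q := by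
  unfold gsec
  rw [map_add]
  exact Finsupp.sum_add_index' (fun x => gsec_zero_fun 𝒜 ℳ κ x)
    (fun x b₁ b₂ => by rw [dcomp_add, add_smul, dcomp_add])

lemma gsec_zero (κ : ℤ) : gsec 𝒜 ℳ σ κ (0 : P) = 0 := by
  unfold gsec
  rw [map_zero, Finsupp.sum_zero_index]

lemma gsec_neg (κ : ℤ) (p : P) : gsec 𝒜 ℳ σ κ (-p) = - gsec 𝒜 ℳ σ κ p := by
  have := gsec_add 𝒜 ℳ (σ := σ) κ p (-p)
  rw [add_neg_cancel, gsec_zero] at this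
  exact eq_neg_of_add_eq_zero_right this.symm

lemma gsec_smul (hA₀ : (A₀ : Set A) = (𝒜 0 : Set A)) (κ : ℤ) (a : A₀) (p : P) :
    gsec 𝒜 ℳ σ κ ((a : A) • p) = (a : A) • gsec 𝒜 ℳ σ κ p := by
  unfold gsec
  rw [map_smul, Finsupp.sum_smul_index (fun x => gsec_zero_fun 𝒜 ℳ κ x), Finsupp.smul_sum]
  refine Finsupp.sum_congr (fun x _ => ?_)
  rw [dcomp_mul 𝒜 (coe_mem_zero 𝒜 A₀ hA₀ a), show (0 : ℤ) - 0 = 0 by ring, mul_smul,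
    dcomp_smul 𝒜 ℳ (hsmM 𝒜 ℳ) (coe_mem_zero 𝒜 A₀ hA₀ a), show κ - 0 = κ by ring]

lemma gsec_mem (κ : ℤ) (p : P) : gsec 𝒜 ℳ σ κ p ∈ ℳ κ := by
  unfold gsec
  rw [Finsupp.sum]
  exact AddSubgroup.sum_mem _ (fun x _ => dcomp_mem ℳ κ _)

lemma gsec_posGen (hsupp : ∀ n : ℤ, n < 0 → 𝒜 n = ⊥) (κ : ℤ) {n : ℤ} (hn : 0 < n) {a : A}
    (ha : a ∈ 𝒜 n) (q : P) : gsec 𝒜 ℳ σ κ (a • q) = 0 := by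
  unfold gsec
  rw [map_smul, Finsupp.sum_smul_index (fun x => gsec_zero_fun 𝒜 ℳ κ x)]
  refine Finset.sum_eq_zero (fun x _ => ?_)
  show dcomp ℳ κ (dcomp 𝒜 0 (a * σ q x) • x) = 0
  rw [dcomp_mul 𝒜 ha, eq_zero_of_mem_neg 𝒜 hsupp (show (0:ℤ) - n < 0 by omega)
    (dcomp_mem 𝒜 (0 - n) _), mul_zero, zero_smul, dcomp_zero]

lemma gsec_posSMul (hsupp : ∀ n : ℤ, n < 0 → 𝒜 n = ⊥) (κ : ℤ) {y : P}
    (hy : y ∈ posSMulSubmodule 𝒜 P) : gsec 𝒜 ℳ σ κ y = 0 := by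
  have hy' := posSMul_le_posClosure 𝒜 hsupp hy
  clear hy
  induction hy' using AddSubgroup.closure_induction with
  | mem x hxg =>
    obtain ⟨n, hn, a, ha, p, rfl⟩ := hxg
    exact gsec_posGen 𝒜 ℳ hsupp κ hn ha p
  | zero => exact gsec_zero 𝒜 ℳ κ
  | add x y hx hy ihx ihy => rw [gsec_add 𝒜 ℳ, ihx, ihy, add_zero]
  | neg x hx ihx => rw [gsec_neg 𝒜 ℳ, ihx, neg_zero]

lemma sub_comp_zero_smul_mem (hsupp : ∀ n : ℤ, n < 0 → 𝒜 n = ⊥) (a : A) (x : P) :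
    (a - dcomp 𝒜 0 a) • x ∈ posSMulSubmodule 𝒜 P := by
  obtain ⟨s, hs0, hsum⟩ := dcomp_finsum 𝒜 a
  have key : a - dcomp 𝒜 0 a = ∑ m ∈ s.erase 0, dcomp 𝒜 m a := by
    by_cases h0 : (0 : ℤ) ∈ s
    · have h1 : a = dcomp 𝒜 0 a + ∑ m ∈ s.erase 0, dcomp 𝒜 m a := by
        rw [Finset.add_sum_erase s (fun m => dcomp 𝒜 m a) h0]
        exact hsum
      exact sub_eq_of_eq_add' h1
    · rw [hs0 0 h0, Finset.erase_eq_of_notMem h0, sub_zero]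
      exact hsum
  rw [key, Finset.sum_smul]
  refine Submodule.sum_mem _ (fun m hm => ?_)
  have hmne : m ≠ 0 := Finset.ne_of_mem_erase hm
  rcases lt_or_gt_of_ne hmne with hm' | hm'
  · rw [eq_zero_of_mem_neg 𝒜 hsupp hm' (dcomp_mem 𝒜 m a), zero_smul]
    exact zero_mem _
  · exact pos_smul_mem 𝒜 hm' (dcomp_mem 𝒜 m a) x

include hσ in
lemma mk_gsec (hsupp : ∀ n : ℤ, n < 0 → 𝒜 n = ⊥) {κ : ℤ} {p : P} (hp : p ∈ ℳ κ) :
    mkp (gsec 𝒜 ℳ σ κ p) = mkp p := by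
  rw [Submodule.Quotient.eq]
  have e1 : dcomp ℳ κ p = (σ p).sum fun x a => dcomp ℳ κ (a • x) := by
    conv_lhs => rw [← hσ p]
    rw [Finsupp.linearCombination_apply, ← dcompHom_apply, map_finsuppSum]
    rfl
  have e2 : gsec 𝒜 ℳ σ κ p - p
      = (σ p).sum fun x a => (dcomp ℳ κ (dcomp 𝒜 0 a • x) - dcomp ℳ κ (a • x)) := by
    rw [Finsupp.sum_sub]
    unfold gsec
    rw [← e1, dcomp_of_mem_same ℳ hp]
  rw [e2, Finsupp.sum]
  refine Submodule.sum_mem _ (fun x _ => ?_)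
  rw [← dcomp_sub, ← sub_smul]
  have h3 : (dcomp 𝒜 0 (σ p x) - σ p x) • x = -((σ p x - dcomp 𝒜 0 (σ p x)) • x) := by
    rw [← neg_smul, neg_sub]
  rw [h3]
  exact dcomp_mem_posSMul 𝒜 ℳ hsupp (neg_mem (sub_comp_zero_smul_mem 𝒜 hsupp (σ p x) x)) κ

variable (σ) in
/-- `gsec` as an `A₀`-linear map -/
noncomputable def gsecLin (hA₀ : (A₀ : Set A) = (𝒜 0 : Set A)) (κ : ℤ) : P →ₗ[A₀] P where
  toFun := gsec 𝒜 ℳ σ κ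
  map_add' := gsec_add 𝒜 ℳ κ
  map_smul' := fun a p => by
    show gsec 𝒜 ℳ σ κ ((a : A) • p) = (a : A) • gsec 𝒜 ℳ σ κ p
    exact gsec_smul 𝒜 ℳ A₀ hA₀ κ a p

variable (σ) in
/-- descended homogeneous section of the quotient map -/
noncomputable def sbar (hA₀ : (A₀ : Set A) = (𝒜 0 : Set A))
    (hsupp : ∀ n : ℤ, n < 0 → 𝒜 n = ⊥) (κ : ℤ) :
    (P ⧸ posSMulSubmodule 𝒜 P) →ₗ[A₀] P :=
  (((posSMulSubmodule 𝒜 P).restrictScalars A₀).liftQ (gsecLin 𝒜 ℳ A₀ σ hA₀ κ)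
      (fun y hy => gsec_posSMul 𝒜 ℳ hsupp κ hy)).comp
    (Submodule.Quotient.restrictScalarsEquiv A₀ (posSMulSubmodule 𝒜 P)).symm.toLinearMap

lemma sbar_mk (hA₀ : (A₀ : Set A) = (𝒜 0 : Set A))
    (hsupp : ∀ n : ℤ, n < 0 → 𝒜 n = ⊥) (κ : ℤ) (p : P) :
    sbar 𝒜 ℳ A₀ σ hA₀ hsupp κ (mkp p) = gsec 𝒜 ℳ σ κ p := by
  unfold sbar
  rfl

lemma sbar_mem (hA₀ : (A₀ : Set A) = (𝒜 0 : Set A))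
    (hsupp : ∀ n : ℤ, n < 0 → 𝒜 n = ⊥) (κ : ℤ) (t : P ⧸ posSMulSubmodule 𝒜 P) :
    sbar 𝒜 ℳ A₀ σ hA₀ hsupp κ t ∈ ℳ κ := by
  obtain ⟨p, rfl⟩ := Submodule.Quotient.mk_surjective _ t
  rw [sbar_mk]
  exact gsec_mem 𝒜 ℳ κ p

include hσ in
lemma mk_sbar (hA₀ : (A₀ : Set A) = (𝒜 0 : Set A))
    (hsupp : ∀ n : ℤ, n < 0 → 𝒜 n = ⊥) {κ : ℤ} {t : P ⧸ posSMulSubmodule 𝒜 P}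
    (ht : t ∈ TSub 𝒜 A₀ P ℳ κ) :
    mkp (sbar 𝒜 ℳ A₀ σ hA₀ hsupp κ t) = t := by
  obtain ⟨p, hp, rfl⟩ := TSub_exists_rep 𝒜 ℳ A₀ hA₀ ht
  rw [sbar_mk]
  exact mk_gsec 𝒜 ℳ hσ hsupp hp

-- ==================== chunk 4: main induction ====================

include hσ in
lemma main_induction (hA₀ : (A₀ : Set A) = (𝒜 0 : Set A))
    (hsupp : ∀ n : ℤ, n < 0 → 𝒜 n = ⊥) [Module.Finite A P]
    (Q : Submodule A P) (c : ℤ → Prop) (hc : ∀ {i j : ℤ}, i ≤ j → c j → c i)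
    (hgen : ∀ ω : ℤ, c ω → ∀ p ∈ ℳ ω, sbar 𝒜 ℳ A₀ σ hA₀ hsupp ω (mkp p) ∈ Q) :
    ∀ ω : ℤ, c ω → ∀ p ∈ ℳ ω, p ∈ Q := by
  obtain ⟨n₀, hn₀⟩ := exists_bound 𝒜 ℳ hsupp
  suffices H : ∀ k : ℕ, ∀ ω : ℤ, ω < n₀ + k → c ω → ∀ p ∈ ℳ ω, p ∈ Q by
    intro ω hcω p hp
    exact H (ω + 1 - n₀).toNat ω (by omega) hcω p hp
  intro k
  induction k with
  | zero =>
    intro ω hω hcω p hp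
    rw [hn₀ ω (by omega) p hp]
    exact zero_mem _
  | succ k ih =>
    intro ω hω hcω p hp
    rcases lt_or_ge ω (n₀ + k) with h | h
    · exact ih ω h hcω p hp
    have hωeq : ω = n₀ + k := by omega
    set r : P := p - sbar 𝒜 ℳ A₀ σ hA₀ hsupp ω (mkp p) with hr
    have hr1 : r ∈ ℳ ω := sub_mem hp (sbar_mem 𝒜 ℳ A₀ hA₀ hsupp ω _)
    have hr2 : r ∈ posSMulSubmodule 𝒜 P := by
      rw [← Submodule.Quotient.mk_eq_zero (posSMulSubmodule 𝒜 P) (x := r)]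
      show mkp r = 0
      rw [hr, Submodule.Quotient.mk_sub,
        mk_sbar 𝒜 ℳ A₀ hσ hA₀ hsupp (mk_mem_TSub 𝒜 ℳ A₀ hp), sub_self]
    have key : ∀ y ∈ posSMulSubmodule 𝒜 P, dcomp ℳ ω y ∈ Q := by
      intro y hy
      have hy' := posSMul_le_posClosure 𝒜 hsupp hy
      clear hy
      induction hy' using AddSubgroup.closure_induction with
      | mem x hxg =>
        obtain ⟨m, hm, a, ha, q, rfl⟩ := hxg
        rw [dcomp_smul 𝒜 ℳ (hsmM 𝒜 ℳ) ha]
        refine Submodule.smul_mem _ a ?_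
        exact ih (ω - m) (by omega) (hc (by omega) hcω) _ (dcomp_mem ℳ (ω - m) q)
      | zero => rw [dcomp_zero]; exact zero_mem _
      | add x y hx hy ihx ihy => rw [dcomp_add]; exact add_mem ihx ihy
      | neg x hx ihx => rw [dcomp_neg]; exact neg_mem ihx
    have : p = sbar 𝒜 ℳ A₀ σ hA₀ hsupp ω (mkp p) + r := by rw [hr]; abel
    rw [this]
    exact add_mem (hgen ω hcω p hp) ((dcomp_of_mem_same ℳ hr1) ▸ key r hr2)

-- ==================== chunk 5a: the model Ehat ====================

variable (P) in
/-- index type for the free module -/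
abbrev Idx := (κ : ℤ) × (TSub 𝒜 A₀ P ℳ κ)

local notation "F𝔽" => ((Idx 𝒜 P ℳ A₀) →₀ A)

variable (P) in
/-- relations -/
def Rgen : Set F𝔽 :=
  {f | (∃ (κ : ℤ) (t t' : TSub 𝒜 A₀ P ℳ κ),
        f = Finsupp.single ⟨κ, t + t'⟩ 1 - Finsupp.single ⟨κ, t⟩ 1 - Finsupp.single ⟨κ, t'⟩ 1)
     ∨ (∃ (κ : ℤ) (a₀ : A₀) (t : TSub 𝒜 A₀ P ℳ κ),
        f = Finsupp.single ⟨κ, (a₀ • t : TSub 𝒜 A₀ P ℳ κ)⟩ 1 - Finsupp.single ⟨κ, t⟩ (a₀ : A))}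

variable (P) in
noncomputable def Rsub : Submodule A F𝔽 := Submodule.span A (Rgen 𝒜 P ℳ A₀)

variable (P) in
abbrev Ehat := F𝔽 ⧸ (Rsub 𝒜 P ℳ A₀)

variable (P) in
noncomputable def mkE : F𝔽 →ₗ[A] Ehat 𝒜 P ℳ A₀ := (Rsub 𝒜 P ℳ A₀).mkQ

section ehat
variable {N : Type u} [AddCommGroup N] [Module A N]

/-- universal lift -/
noncomputable def elift (w : ∀ κ : ℤ, (TSub 𝒜 A₀ P ℳ κ) →ₗ[A₀] N) :
    Ehat 𝒜 P ℳ A₀ →ₗ[A] N :=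
  (Rsub 𝒜 P ℳ A₀).liftQ (Finsupp.linearCombination A (fun i : Idx 𝒜 P ℳ A₀ => w i.1 i.2))
    (by
      rw [Rsub, Submodule.span_le]
      rintro g (⟨κ, t, t', rfl⟩ | ⟨κ, a₀, t, rfl⟩) <;>
        simp only [SetLike.mem_coe, LinearMap.mem_ker, map_sub,
          Finsupp.linearCombination_single, one_smul]
      · rw [(w κ).map_add]
        abel
      · rw [(w κ).map_smul, sub_eq_zero]
        rfl)

variable (P) in
/-- canonical generators -/
noncomputable def eta (κ : ℤ) (t : TSub 𝒜 A₀ P ℳ κ) : Ehat 𝒜 P ℳ A₀ :=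
  mkE 𝒜 P ℳ A₀ (Finsupp.single ⟨κ, t⟩ 1)

lemma elift_eta (w : ∀ κ : ℤ, (TSub 𝒜 A₀ P ℳ κ) →ₗ[A₀] N) (κ : ℤ)
    (t : TSub 𝒜 A₀ P ℳ κ) : elift 𝒜 ℳ A₀ w (eta 𝒜 P ℳ A₀ κ t) = w κ t := by
  unfold elift eta mkE
  rw [Submodule.mkQ_apply, Submodule.liftQ_apply, Finsupp.linearCombination_single, one_smul]

lemma mkE_single (i : Idx 𝒜 P ℳ A₀) (a : A) :
    mkE 𝒜 P ℳ A₀ (Finsupp.single i a) = a • eta 𝒜 P ℳ A₀ i.1 i.2 := by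
  rw [eta, ← map_smul, Finsupp.smul_single', mul_one]

lemma eta_add (κ : ℤ) (t t' : TSub 𝒜 A₀ P ℳ κ) :
    eta 𝒜 P ℳ A₀ κ (t + t') = eta 𝒜 P ℳ A₀ κ t + eta 𝒜 P ℳ A₀ κ t' := by
  unfold eta mkE
  rw [← map_add, Submodule.mkQ_apply, Submodule.mkQ_apply, Submodule.Quotient.eq]
  refine Submodule.subset_span (Or.inl ⟨κ, t, t', ?_⟩)
  abel

lemma eta_smul (κ : ℤ) (a₀ : A₀) (t : TSub 𝒜 A₀ P ℳ κ) :
    eta 𝒜 P ℳ A₀ κ (a₀ • t) = (a₀ : A) • eta 𝒜 P ℳ A₀ κ t := by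
  unfold eta mkE
  rw [← map_smul, Finsupp.smul_single', mul_one, Submodule.mkQ_apply, Submodule.mkQ_apply,
    Submodule.Quotient.eq]
  exact Submodule.subset_span (Or.inr ⟨κ, a₀, t, rfl⟩)

lemma eta_zero (κ : ℤ) : eta 𝒜 P ℳ A₀ κ 0 = 0 := by
  have := eta_add 𝒜 ℳ A₀ κ 0 0
  rw [add_zero] at this
  exact left_eq_add.mp this

variable (P) in
noncomputable def etaLin (κ : ℤ) : (TSub 𝒜 A₀ P ℳ κ) →ₗ[A₀] Ehat 𝒜 P ℳ A₀ where
  toFun := eta 𝒜 P ℳ A₀ κ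
  map_add' := eta_add 𝒜 ℳ A₀ κ
  map_smul' := fun a₀ t => by
    show eta 𝒜 P ℳ A₀ κ (a₀ • t) = (a₀ : A) • eta 𝒜 P ℳ A₀ κ t
    exact eta_smul 𝒜 ℳ A₀ κ a₀ t

lemma ehat_ext {g₁ g₂ : Ehat 𝒜 P ℳ A₀ →ₗ[A] N}
    (h : ∀ (κ : ℤ) (t : TSub 𝒜 A₀ P ℳ κ), g₁ (eta 𝒜 P ℳ A₀ κ t) = g₂ (eta 𝒜 P ℳ A₀ κ t)) :
    g₁ = g₂ := by
  refine Submodule.linearMap_qext _ (Finsupp.lhom_ext fun i b => ?_)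
  show g₁ (mkE 𝒜 P ℳ A₀ (Finsupp.single i b)) = g₂ (mkE 𝒜 P ℳ A₀ (Finsupp.single i b))
  rw [mkE_single, map_smul, map_smul, h i.1 i.2]

end ehat

/-- the comparison map to `P` -/
noncomputable def hhat (hA₀ : (A₀ : Set A) = (𝒜 0 : Set A))
    (hsupp : ∀ n : ℤ, n < 0 → 𝒜 n = ⊥) : Ehat 𝒜 P ℳ A₀ →ₗ[A] P :=
  elift 𝒜 ℳ A₀ (fun κ => (sbar 𝒜 ℳ A₀ σ hA₀ hsupp κ).comp (TSub 𝒜 A₀ P ℳ κ).subtype)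

lemma hhat_eta (hA₀ : (A₀ : Set A) = (𝒜 0 : Set A))
    (hsupp : ∀ n : ℤ, n < 0 → 𝒜 n = ⊥) (κ : ℤ) (t : TSub 𝒜 A₀ P ℳ κ) :
    hhat 𝒜 ℳ A₀ (σ := σ) hA₀ hsupp (eta 𝒜 P ℳ A₀ κ t) = sbar 𝒜 ℳ A₀ σ hA₀ hsupp κ (t : P ⧸ posSMulSubmodule 𝒜 P) :=
  elift_eta 𝒜 ℳ A₀ _ κ t

include hσ in
lemma hhat_surj (hA₀ : (A₀ : Set A) = (𝒜 0 : Set A))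
    (hsupp : ∀ n : ℤ, n < 0 → 𝒜 n = ⊥) [Module.Finite A P] :
    Function.Surjective (hhat 𝒜 ℳ A₀ (σ := σ) hA₀ hsupp) := by
  rw [← LinearMap.range_eq_top]
  have h1 : ∀ ω : ℤ, ∀ p ∈ ℳ ω, p ∈ LinearMap.range (hhat 𝒜 ℳ A₀ (σ := σ) hA₀ hsupp) := by
    have := main_induction 𝒜 ℳ A₀ hσ hA₀ hsupp
      (LinearMap.range (hhat 𝒜 ℳ A₀ (σ := σ) hA₀ hsupp)) (fun _ => True)
      (fun _ h => h) ?_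
    · intro ω p hp; exact this ω trivial p hp
    · intro ω _ p hp
      exact ⟨eta 𝒜 P ℳ A₀ ω ⟨mkp p, mk_mem_TSub 𝒜 ℳ A₀ hp⟩, hhat_eta 𝒜 ℳ A₀ hA₀ hsupp ω _⟩
  rw [eq_top_iff]
  intro p _
  obtain ⟨s, hs0, hsum⟩ := dcomp_finsum ℳ p
  rw [hsum]
  exact Submodule.sum_mem _ (fun n _ => h1 n _ (dcomp_mem ℳ n p))

-- ==================== chunk 5b: grading on Ehat ====================

variable (P) in
/-- degree-`n` part of the free module -/
def Fdeg (n : ℤ) : AddSubmonoid F𝔽 where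
  carrier := {f | ∀ i : Idx 𝒜 P ℳ A₀, f i ∈ 𝒜 (n - i.1)}
  add_mem' := fun hf hg i => by rw [Finsupp.add_apply]; exact add_mem (hf i) (hg i)
  zero_mem' := fun i => by rw [Finsupp.zero_apply]; exact zero_mem _

variable (P) in
/-- degree-`n` part of `Ehat` -/
noncomputable def Edeg (n : ℤ) : AddSubmonoid (Ehat 𝒜 P ℳ A₀) :=
  (Fdeg 𝒜 P ℳ A₀ n).map (mkE 𝒜 P ℳ A₀).toAddMonoidHom

lemma single_mem_Fdeg {n κ : ℤ} (t : TSub 𝒜 A₀ P ℳ κ) {a : A} (ha : a ∈ 𝒜 (n - κ)) :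
    Finsupp.single (⟨κ, t⟩ : Idx 𝒜 P ℳ A₀) a ∈ Fdeg 𝒜 P ℳ A₀ n := by
  intro i
  classical
  rw [Finsupp.single_apply]
  split_ifs with h
  · obtain rfl := h
    exact ha
  · exact zero_mem _

lemma mkE_mem_Edeg {n : ℤ} {f : F𝔽} (hf : f ∈ Fdeg 𝒜 P ℳ A₀ n) :
    mkE 𝒜 P ℳ A₀ f ∈ Edeg 𝒜 P ℳ A₀ n := ⟨f, hf, rfl⟩

lemma hhat_mkE (hA₀ : (A₀ : Set A) = (𝒜 0 : Set A))
    (hsupp : ∀ n : ℤ, n < 0 → 𝒜 n = ⊥) (f : F𝔽) :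
    hhat 𝒜 ℳ A₀ (σ := σ) hA₀ hsupp (mkE 𝒜 P ℳ A₀ f)
      = f.sum fun i a => a • sbar 𝒜 ℳ A₀ σ hA₀ hsupp i.1 (i.2 : P ⧸ posSMulSubmodule 𝒜 P) := by
  unfold hhat elift mkE
  rw [Submodule.mkQ_apply, Submodule.liftQ_apply, Finsupp.linearCombination_apply]
  rfl

lemma hhat_Edeg (hA₀ : (A₀ : Set A) = (𝒜 0 : Set A))
    (hsupp : ∀ n : ℤ, n < 0 → 𝒜 n = ⊥) {n : ℤ} {z : Ehat 𝒜 P ℳ A₀}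
    (hz : z ∈ Edeg 𝒜 P ℳ A₀ n) : hhat 𝒜 ℳ A₀ (σ := σ) hA₀ hsupp z ∈ ℳ n := by
  obtain ⟨f, hf, rfl⟩ := hz
  show hhat 𝒜 ℳ A₀ (σ := σ) hA₀ hsupp (mkE 𝒜 P ℳ A₀ f) ∈ ℳ n
  rw [hhat_mkE, Finsupp.sum]
  refine AddSubgroup.sum_mem _ (fun i _ => ?_)
  have := hsmM 𝒜 ℳ (hf i) (sbar_mem 𝒜 ℳ A₀ (σ := σ) hA₀ hsupp i.1 (i.2 : P ⧸ posSMulSubmodule 𝒜 P))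
  rwa [show n - i.1 + i.1 = n by ring] at this

lemma smul_Fdeg {m n : ℤ} {a : A} (ha : a ∈ 𝒜 m) {f : F𝔽} (hf : f ∈ Fdeg 𝒜 P ℳ A₀ n) :
    a • f ∈ Fdeg 𝒜 P ℳ A₀ (n + m) := by
  intro i
  rw [Finsupp.smul_apply, smul_eq_mul]
  have := SetLike.mul_mem_graded ha (hf i)
  rwa [show m + (n - i.1) = n + m - i.1 by ring] at this

lemma smul_Edeg {m n : ℤ} {a : A} (ha : a ∈ 𝒜 m) {z : Ehat 𝒜 P ℳ A₀}
    (hz : z ∈ Edeg 𝒜 P ℳ A₀ n) : a • z ∈ Edeg 𝒜 P ℳ A₀ (n + m) := by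
  obtain ⟨f, hf, rfl⟩ := hz
  exact ⟨a • f, smul_Fdeg 𝒜 ℳ A₀ ha hf, map_smul (mkE 𝒜 P ℳ A₀) a f⟩

lemma Edeg_top (z : Ehat 𝒜 P ℳ A₀) : z ∈ ⨆ n : ℤ, Edeg 𝒜 P ℳ A₀ n := by
  obtain ⟨f, rfl⟩ := Submodule.mkQ_surjective (Rsub 𝒜 P ℳ A₀) z
  show mkE 𝒜 P ℳ A₀ f ∈ _
  induction f using Finsupp.induction with
  | zero => rw [map_zero]; exact zero_mem _
  | single_add i b f _ _ ih =>
    rw [map_add]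
    refine add_mem ?_ ih
    obtain ⟨s, hs0, hsum⟩ := dcomp_finsum 𝒜 b
    have : Finsupp.single i b = ∑ m ∈ s, Finsupp.single i (dcomp 𝒜 m b) := by
      conv_lhs => rw [hsum]
      exact map_sum (Finsupp.singleAddHom i) _ s
    rw [this, map_sum]
    refine sum_mem (fun m _ => ?_)
    refine (le_iSup (Edeg 𝒜 P ℳ A₀) (m + i.1)) ?_
    refine mkE_mem_Edeg 𝒜 ℳ A₀ ?_
    exact single_mem_Fdeg 𝒜 ℳ A₀ i.2
      (by rw [show m + i.1 - i.1 = m by ring]; exact dcomp_mem 𝒜 m b)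

lemma TSub_trivial (hA₀ : (A₀ : Set A) = (𝒜 0 : Set A)) {ω : ℤ}
    (hb : ∀ p ∈ ℳ ω, p = (0 : P)) (t : TSub 𝒜 A₀ P ℳ ω) : t = 0 := by
  obtain ⟨p, hp, hmk⟩ := TSub_exists_rep 𝒜 ℳ A₀ hA₀ t.2
  have : (t : P ⧸ posSMulSubmodule 𝒜 P) = 0 := by
    rw [← hmk, hb p hp]
    exact Submodule.Quotient.mk_eq_zero _ |>.mpr (zero_mem _)
  exact Subtype.ext this

lemma P_indep (s : Finset ℤ) (m : ℤ → P) (hm : ∀ n ∈ s, m n ∈ ℳ n)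
    (h0 : ∑ n ∈ s, m n = 0) : ∀ n ∈ s, m n = 0 := by
  intro j hj
  have h1 : dcomp ℳ j (∑ n ∈ s, m n) = m j := by
    rw [← dcompHom_apply, map_sum]
    rw [Finset.sum_eq_single_of_mem j hj
      (fun n hn hne => by rw [dcompHom_apply]; exact dcomp_of_mem_ne ℳ (hm n hn) hne)]
    rw [dcompHom_apply]
    exact dcomp_of_mem_same ℳ (hm j hj)
  rw [h0, dcomp_zero] at h1
  exact h1.symm

lemma ker_decomp (hA₀ : (A₀ : Set A) = (𝒜 0 : Set A))
    (hsupp : ∀ n : ℤ, n < 0 → 𝒜 n = ⊥) (z : Ehat 𝒜 P ℳ A₀)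
    (hz : hhat 𝒜 ℳ A₀ (σ := σ) hA₀ hsupp z = 0) :
    ∃ (s : Finset ℤ) (cz : ℤ → Ehat 𝒜 P ℳ A₀), (∀ n, cz n ∈ Edeg 𝒜 P ℳ A₀ n) ∧
      (∀ n, hhat 𝒜 ℳ A₀ (σ := σ) hA₀ hsupp (cz n) = 0) ∧ z = ∑ n ∈ s, cz n := by
  classical
  have h1 := Edeg_top 𝒜 ℳ A₀ z
  rw [AddSubmonoid.mem_iSup_iff_exists_dfinsupp] at h1
  obtain ⟨w, hw⟩ := h1
  refine ⟨w.support, fun n => (w n : Ehat 𝒜 P ℳ A₀), fun n => (w n).2, ?_, ?_⟩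
  · have hzsum : z = ∑ n ∈ w.support, ((w n : Ehat 𝒜 P ℳ A₀)) := by
      rw [← hw, DFinsupp.sumAddHom_apply]
      rfl
    have hker : ∀ n ∈ w.support,
        hhat 𝒜 ℳ A₀ (σ := σ) hA₀ hsupp ((w n : Ehat 𝒜 P ℳ A₀)) = 0 := by
      refine P_indep ℳ w.support _ (fun n _ => hhat_Edeg 𝒜 ℳ A₀ hA₀ hsupp (w n).2) ?_
      rw [← map_sum, ← hzsum, hz]
    intro n
    by_cases hn : n ∈ w.support
    · exact hker n hn
    · show hhat 𝒜 ℳ A₀ (σ := σ) hA₀ hsupp ((w n : Ehat 𝒜 P ℳ A₀)) = 0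
      rw [DFinsupp.notMem_support_iff.mp hn]
      simp
  · rw [← hw, DFinsupp.sumAddHom_apply]
    rfl

variable (P) in
/-- degree-`n` component extractor on the free module -/
noncomputable def fcomp (n : ℤ) (f : F𝔽) : F𝔽 :=
  f.sum fun i a => Finsupp.single i (dcomp 𝒜 (n - i.1) a)

lemma fcomp_single (n : ℤ) (i : Idx 𝒜 P ℳ A₀) (a : A) :
    fcomp 𝒜 P ℳ A₀ n (Finsupp.single i a) = Finsupp.single i (dcomp 𝒜 (n - i.1) a) :=
  Finsupp.sum_single_index (by rw [dcomp_zero, Finsupp.single_zero])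

lemma fcomp_add (n : ℤ) (f g : F𝔽) :
    fcomp 𝒜 P ℳ A₀ n (f + g) = fcomp 𝒜 P ℳ A₀ n f + fcomp 𝒜 P ℳ A₀ n g :=
  Finsupp.sum_add_index' (fun i => by rw [dcomp_zero, Finsupp.single_zero])
    (fun i b c => by rw [dcomp_add, Finsupp.single_add])

variable (P) in
noncomputable def fcompHom (n : ℤ) : F𝔽 →+ F𝔽 :=
  AddMonoidHom.mk' (fcomp 𝒜 P ℳ A₀ n) (fcomp_add 𝒜 ℳ A₀ n)

lemma fcompHom_apply (n : ℤ) (f : F𝔽) : fcompHom 𝒜 P ℳ A₀ n f = fcomp 𝒜 P ℳ A₀ n f := rfl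

lemma fcomp_sub (n : ℤ) (f g : F𝔽) :
    fcomp 𝒜 P ℳ A₀ n (f - g) = fcomp 𝒜 P ℳ A₀ n f - fcomp 𝒜 P ℳ A₀ n g :=
  (fcompHom 𝒜 P ℳ A₀ n).map_sub f g

lemma fcomp_zero (n : ℤ) : fcomp 𝒜 P ℳ A₀ n (0 : F𝔽) = 0 :=
  (fcompHom 𝒜 P ℳ A₀ n).map_zero

lemma fcomp_of_mem {n : ℤ} {f : F𝔽} (hf : f ∈ Fdeg 𝒜 P ℳ A₀ n) :
    fcomp 𝒜 P ℳ A₀ n f = f := by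
  conv_rhs => rw [← Finsupp.sum_single f]
  unfold fcomp
  rw [Finsupp.sum, Finsupp.sum]
  exact Finset.sum_congr rfl (fun i _ => by rw [dcomp_of_mem_same 𝒜 (hf i)])

lemma fcomp_of_mem_ne {n n' : ℤ} (h : n' ≠ n) {f : F𝔽} (hf : f ∈ Fdeg 𝒜 P ℳ A₀ n') :
    fcomp 𝒜 P ℳ A₀ n f = 0 := by
  unfold fcomp
  rw [Finsupp.sum]
  refine Finset.sum_eq_zero (fun i _ => ?_)
  rw [dcomp_of_mem_ne 𝒜 (hf i) (fun hc => h (by omega)), Finsupp.single_zero]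

lemma fcomp_smul (a : A) (f : F𝔽) (n : ℤ) (sa : Finset ℤ)
    (hsa0 : ∀ m ∉ sa, dcomp 𝒜 m a = 0) (hsum : a = ∑ m ∈ sa, dcomp 𝒜 m a) :
    fcomp 𝒜 P ℳ A₀ n (a • f) = ∑ m ∈ sa, dcomp 𝒜 m a • fcomp 𝒜 P ℳ A₀ (n - m) f := by
  induction f using Finsupp.induction with
  | zero =>
    rw [smul_zero, fcomp_zero]
    rw [Finset.sum_congr rfl (fun m _ => by rw [fcomp_zero, smul_zero])]
    rw [Finset.sum_const, smul_zero]
  | single_add i b f hb hf ih =>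
    rw [smul_add, fcomp_add]
    rw [Finset.sum_congr rfl (fun m _ => by rw [fcomp_add, smul_add])]
    rw [Finset.sum_add_distrib, ← ih]
    congr 1
    -- single case
    rw [Finsupp.smul_single', fcomp_single]
    have key : dcomp 𝒜 (n - i.1) (a * b) = ∑ m ∈ sa, dcomp 𝒜 m a * dcomp 𝒜 (n - i.1 - m) b := by
      conv_lhs => rw [hsum]
      rw [Finset.sum_mul, ← dcompHom_apply, map_sum]
      exact Finset.sum_congr rfl (fun m _ => by
        rw [dcompHom_apply, dcomp_mul 𝒜 (dcomp_mem 𝒜 m a)])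
    have rhs_eq : ∀ m ∈ sa, dcomp 𝒜 m a • fcomp 𝒜 P ℳ A₀ (n - m) (Finsupp.single i b)
        = Finsupp.single i (dcomp 𝒜 m a * dcomp 𝒜 (n - i.1 - m) b) := fun m _ => by
      rw [fcomp_single, Finsupp.smul_single', show n - m - i.1 = n - i.1 - m by ring]
    rw [key, Finset.sum_congr rfl rhs_eq]
    exact map_sum (Finsupp.singleAddHom i) (fun m => dcomp 𝒜 m a * dcomp 𝒜 (n - i.1 - m) b) sa

lemma R_graded (hA₀ : (A₀ : Set A) = (𝒜 0 : Set A)) {f : F𝔽} (hf : f ∈ Rsub 𝒜 P ℳ A₀) :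
    ∀ n : ℤ, fcomp 𝒜 P ℳ A₀ n f ∈ Rsub 𝒜 P ℳ A₀ := by
  induction hf using Submodule.span_induction with
  | mem g hg =>
    intro n
    rcases hg with ⟨κ, t, t', rfl⟩ | ⟨κ, a₀, t, rfl⟩
    · rw [fcomp_sub, fcomp_sub, fcomp_single, fcomp_single, fcomp_single]
      by_cases hn : n = κ
      · subst hn
        rw [show n - (⟨n, t + t'⟩ : Idx 𝒜 P ℳ A₀).1 = 0 by simp,
          dcomp_of_mem_same 𝒜 (SetLike.one_mem_graded 𝒜)]
        exact Submodule.subset_span (Or.inl ⟨n, t, t', rfl⟩)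
      · rw [show n - (⟨κ, t + t'⟩ : Idx 𝒜 P ℳ A₀).1 = n - κ from rfl,
          dcomp_of_mem_ne 𝒜 (SetLike.one_mem_graded 𝒜) (fun hc => hn (by omega)),
          Finsupp.single_zero, Finsupp.single_zero, Finsupp.single_zero]
        simpa using zero_mem _
    · rw [fcomp_sub, fcomp_single, fcomp_single]
      by_cases hn : n = κ
      · subst hn
        rw [show n - (⟨n, (a₀ • t : TSub 𝒜 A₀ P ℳ n)⟩ : Idx 𝒜 P ℳ A₀).1 = 0 by simp,
          dcomp_of_mem_same 𝒜 (SetLike.one_mem_graded 𝒜),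
          dcomp_of_mem_same 𝒜 (coe_mem_zero 𝒜 A₀ hA₀ a₀)]
        exact Submodule.subset_span (Or.inr ⟨n, a₀, t, rfl⟩)
      · rw [show n - (⟨κ, (a₀ • t : TSub 𝒜 A₀ P ℳ κ)⟩ : Idx 𝒜 P ℳ A₀).1 = n - κ from rfl,
          dcomp_of_mem_ne 𝒜 (SetLike.one_mem_graded 𝒜) (fun hc => hn (by omega)),
          dcomp_of_mem_ne 𝒜 (coe_mem_zero 𝒜 A₀ hA₀ a₀) (fun hc => hn (by omega)),
          Finsupp.single_zero, Finsupp.single_zero]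
        simpa using zero_mem _
  | zero => intro n; rw [fcomp_zero]; exact zero_mem _
  | add x y hx hy ihx ihy => intro n; rw [fcomp_add]; exact add_mem (ihx n) (ihy n)
  | smul a x hx ihx =>
    intro n
    obtain ⟨sa, hsa0, hsum⟩ := dcomp_finsum 𝒜 a
    rw [fcomp_smul 𝒜 ℳ A₀ a x n sa hsa0 hsum]
    exact Submodule.sum_mem _ (fun m _ => Submodule.smul_mem _ _ (ihx (n - m)))

lemma indep (hA₀ : (A₀ : Set A) = (𝒜 0 : Set A)) {n : ℤ} {z : Ehat 𝒜 P ℳ A₀}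
    (hz : z ∈ Edeg 𝒜 P ℳ A₀ n)
    (hz2 : z ∈ ⨆ n' : {n' : ℤ // n < n'}, Edeg 𝒜 P ℳ A₀ n'.1) : z = 0 := by
  obtain ⟨f, hf, rfl⟩ := hz
  show mkE 𝒜 P ℳ A₀ f = 0
  have hle : (⨆ n' : {n' : ℤ // n < n'}, Edeg 𝒜 P ℳ A₀ n'.1) ≤
      { carrier := {z | ∃ g : F𝔽, mkE 𝒜 P ℳ A₀ g = z ∧
          ∀ k : ℤ, k ≤ n → fcomp 𝒜 P ℳ A₀ k g = 0}
        add_mem' := by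
          rintro z1 z2 ⟨g1, hg1, hg1'⟩ ⟨g2, hg2, hg2'⟩
          exact ⟨g1 + g2, by rw [map_add, hg1, hg2],
            fun k hk => by rw [fcomp_add, hg1' k hk, hg2' k hk, add_zero]⟩
        zero_mem' := ⟨0, map_zero _, fun k _ => fcomp_zero 𝒜 ℳ A₀ k⟩ } := by
    refine iSup_le (fun n' => ?_)
    rintro z ⟨g, hg, rfl⟩
    exact ⟨g, rfl, fun k hk => fcomp_of_mem_ne 𝒜 ℳ A₀ (by have := n'.2; omega) hg⟩
  obtain ⟨g, hgeq, hg0⟩ := hle hz2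
  have h9 : mkE 𝒜 P ℳ A₀ (f - g) = 0 := by
    rw [map_sub, hgeq]
    show mkE 𝒜 P ℳ A₀ f - mkE 𝒜 P ℳ A₀ f = 0
    rw [sub_self]
  have hmem : f - g ∈ Rsub 𝒜 P ℳ A₀ := by
    rwa [mkE, Submodule.mkQ_apply, Submodule.Quotient.mk_eq_zero] at h9
  have h10 := R_graded 𝒜 ℳ A₀ hA₀ hmem n
  rw [fcomp_sub, fcomp_of_mem 𝒜 ℳ A₀ hf, hg0 n le_rfl, sub_zero] at h10
  rw [mkE, Submodule.mkQ_apply, Submodule.Quotient.mk_eq_zero]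
  exact h10

lemma Edeg_bot (hA₀ : (A₀ : Set A) = (𝒜 0 : Set A))
    (hsupp : ∀ n : ℤ, n < 0 → 𝒜 n = ⊥) {n₀ : ℤ}
    (hn₀ : ∀ ω : ℤ, ω < n₀ → ∀ p ∈ ℳ ω, p = (0 : P)) {n : ℤ} (hn : n < n₀) :
    ∀ z ∈ Edeg 𝒜 P ℳ A₀ n, z = 0 := by
  rintro z ⟨f, hf, rfl⟩
  show mkE 𝒜 P ℳ A₀ f = 0
  conv_lhs => rw [← Finsupp.sum_single f]
  rw [Finsupp.sum, map_sum]
  refine Finset.sum_eq_zero (fun i hi => ?_)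
  rcases lt_or_ge i.1 n₀ with h | h
  · have ht : i.2 = 0 := TSub_trivial 𝒜 ℳ A₀ hA₀ (hn₀ i.1 h) i.2
    rw [mkE_single, ht, eta_zero, smul_zero]
  · rw [eq_zero_of_mem_neg 𝒜 hsupp (show n - i.1 < 0 by omega) (hf i),
      Finsupp.single_zero, map_zero]

include hσ in
lemma hhat_inj (hA₀ : (A₀ : Set A) = (𝒜 0 : Set A))
    (hsupp : ∀ n : ℤ, n < 0 → 𝒜 n = ⊥) [Module.Finite A P] [Module.Projective A P] :
    Function.Injective (hhat 𝒜 ℳ A₀ (σ := σ) hA₀ hsupp) := by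
  classical
  rw [← LinearMap.ker_eq_bot]
  by_contra hk
  obtain ⟨z0, hz0mem, hz0ne⟩ := Submodule.exists_mem_ne_zero_of_ne_bot hk
  rw [LinearMap.mem_ker] at hz0mem
  obtain ⟨n₀, hn₀⟩ := exists_bound 𝒜 ℳ hsupp
  set Pred : ℤ → Prop := fun n => ∃ z : Ehat 𝒜 P ℳ A₀,
    hhat 𝒜 ℳ A₀ (σ := σ) hA₀ hsupp z = 0 ∧ z ∈ Edeg 𝒜 P ℳ A₀ n ∧ z ≠ 0 with hPred
  have hex : ∃ n : ℤ, Pred n := by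
    obtain ⟨s, cz, h1, h2, h3⟩ := ker_decomp 𝒜 ℳ A₀ hA₀ hsupp z0 hz0mem
    by_contra hno
    push_neg at hno
    refine hz0ne ?_
    rw [h3]
    refine Finset.sum_eq_zero (fun n _ => ?_)
    by_contra hne
    exact (hno n) ⟨cz n, h2 n, h1 n, hne⟩
  have hbdd : ∃ b : ℤ, ∀ n : ℤ, Pred n → b ≤ n := by
    refine ⟨n₀, fun n hn => ?_⟩
    by_contra hlt
    obtain ⟨z, hz1, hz2, hz3⟩ := hn
    exact hz3 (Edeg_bot 𝒜 ℳ A₀ hA₀ hsupp hn₀ (by omega) z hz2)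
  obtain ⟨nm, hnm, hleast⟩ := Int.exists_least_of_bdd hbdd hex
  obtain ⟨z, hz, hzdeg, hzne⟩ := hnm
  obtain ⟨f, hf, hfz⟩ := hzdeg
  have hfz' : mkE 𝒜 P ℳ A₀ f = z := hfz
  -- splitting
  obtain ⟨σE, hσE⟩ := Module.projective_lifting_property (hhat 𝒜 ℳ A₀ (σ := σ) hA₀ hsupp)
    LinearMap.id (hhat_surj 𝒜 ℳ A₀ hσ hA₀ hsupp)
  have hσE' : ∀ y, hhat 𝒜 ℳ A₀ (σ := σ) hA₀ hsupp (σE y) = y := fun y => by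
    have := LinearMap.ext_iff.mp hσE y
    simpa using this
  -- kernel elements
  set k : Idx 𝒜 P ℳ A₀ → Ehat 𝒜 P ℳ A₀ := fun i =>
    eta 𝒜 P ℳ A₀ i.1 i.2 - σE (hhat 𝒜 ℳ A₀ (σ := σ) hA₀ hsupp (eta 𝒜 P ℳ A₀ i.1 i.2)) with hkdef
  have hk0 : ∀ i, hhat 𝒜 ℳ A₀ (σ := σ) hA₀ hsupp (k i) = 0 := fun i => by
    rw [hkdef]
    simp only [map_sub, hσE']
    rw [sub_self]
  -- support split
  set s1 := f.support.filter (fun i => i.1 = nm) with hs1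
  set s2 := f.support.filter (fun i => ¬ (i.1 = nm)) with hs2
  have hsplit : z = (∑ i ∈ s1, mkE 𝒜 P ℳ A₀ (Finsupp.single i (f i)))
      + ∑ i ∈ s2, mkE 𝒜 P ℳ A₀ (Finsupp.single i (f i)) := by
    rw [← hfz']
    conv_lhs => rw [← Finsupp.sum_single f]
    rw [Finsupp.sum, map_sum]
    exact (Finset.sum_filter_add_sum_filter_not f.support _ _).symm
  have hs2deg : ∀ i ∈ s2, i.1 < nm := by
    intro i hi
    rw [hs2, Finset.mem_filter] at hi
    rcases lt_or_ge i.1 nm with h | h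
    · exact h
    rcases eq_or_lt_of_le h with h' | h'
    · exact absurd h'.symm hi.2
    exfalso
    exact Finsupp.mem_support_iff.mp hi.1
      (eq_zero_of_mem_neg 𝒜 hsupp (show nm - i.1 < 0 by omega) (hf i))
  -- leading term is an eta
  have hterm : ∀ i ∈ s1, ∃ x : TSub 𝒜 A₀ P ℳ nm,
      mkE 𝒜 P ℳ A₀ (Finsupp.single i (f i)) = etaLin 𝒜 P ℳ A₀ nm x := by
    intro i hi
    rw [hs1, Finset.mem_filter] at hi
    obtain ⟨κ, t⟩ := i
    have h : κ = nm := hi.2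
    subst h
    have hb : f ⟨κ, t⟩ ∈ 𝒜 0 := by
      have := hf ⟨κ, t⟩
      rwa [show κ - (⟨κ, t⟩ : Idx 𝒜 P ℳ A₀).1 = 0 by simp] at this
    have hb0 : f ⟨κ, t⟩ ∈ A₀ := by
      have : f ⟨κ, t⟩ ∈ (𝒜 0 : Set A) := hb
      rwa [← hA₀] at this
    refine ⟨(⟨f ⟨κ, t⟩, hb0⟩ : A₀) • t, ?_⟩
    rw [mkE_single]
    show _ • eta 𝒜 P ℳ A₀ κ t = eta 𝒜 P ℳ A₀ κ _
    rw [eta_smul]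
  have hsum1 : (∑ i ∈ s1, mkE 𝒜 P ℳ A₀ (Finsupp.single i (f i)))
      ∈ LinearMap.range (etaLin 𝒜 P ℳ A₀ nm) := by
    refine Submodule.sum_mem _ (fun i hi => ?_)
    obtain ⟨x, hx⟩ := hterm i hi
    exact ⟨x, hx.symm⟩
  obtain ⟨x, hx⟩ := hsum1
  -- x = 0
  have hxz : (x : P ⧸ posSMulSubmodule 𝒜 P) = 0 := by
    have happ := congrArg (⇑((posSMulSubmodule 𝒜 P).mkQ ∘ₗ hhat 𝒜 ℳ A₀ (σ := σ) hA₀ hsupp)) hsplit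
    rw [LinearMap.comp_apply, hz, map_zero, map_add] at happ
    simp only [LinearMap.comp_apply] at happ
    have e1 : (posSMulSubmodule 𝒜 P).mkQ (hhat 𝒜 ℳ A₀ (σ := σ) hA₀ hsupp
        (∑ i ∈ s1, mkE 𝒜 P ℳ A₀ (Finsupp.single i (f i)))) = (x : P ⧸ posSMulSubmodule 𝒜 P) := by
      rw [← hx]
      show (posSMulSubmodule 𝒜 P).mkQ (hhat 𝒜 ℳ A₀ (σ := σ) hA₀ hsupp
        (etaLin 𝒜 P ℳ A₀ nm x)) = _
      rw [show etaLin 𝒜 P ℳ A₀ nm x = eta 𝒜 P ℳ A₀ nm x from rfl, hhat_eta]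
      exact mk_sbar 𝒜 ℳ A₀ hσ hA₀ hsupp x.2
    have e2 : (posSMulSubmodule 𝒜 P).mkQ (hhat 𝒜 ℳ A₀ (σ := σ) hA₀ hsupp
        (∑ i ∈ s2, mkE 𝒜 P ℳ A₀ (Finsupp.single i (f i)))) = 0 := by
      rw [map_sum, map_sum]
      refine Finset.sum_eq_zero (fun i hi => ?_)
      rw [mkE_single, map_smul, hhat_eta, Submodule.mkQ_apply, Submodule.Quotient.mk_eq_zero]
      refine pos_smul_mem 𝒜 (show 0 < nm - i.1 by have := hs2deg i hi; omega) (hf i) _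
    rw [e1, e2, add_zero] at happ
    exact happ.symm
  have hx0 : x = 0 := by
    exact Subtype.ext hxz
  have hz2' : z = ∑ i ∈ s2, mkE 𝒜 P ℳ A₀ (Finsupp.single i (f i)) := by
    have h00 : (∑ i ∈ s1, mkE 𝒜 P ℳ A₀ (Finsupp.single i (f i)))
        = (0 : Ehat 𝒜 P ℳ A₀) := by
      rw [← hx, hx0, map_zero]
    rw [hsplit, h00, zero_add]
  -- rewrite via eta
  have hz3' : z = ∑ i ∈ s2, f i • eta 𝒜 P ℳ A₀ i.1 i.2 := by
    rw [hz2']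
    exact Finset.sum_congr rfl (fun i _ => mkE_single 𝒜 ℳ A₀ i (f i))
  -- z as combination of kernel elements
  have hzk : z = ∑ i ∈ s2, f i • k i := by
    have e3 : ∑ i ∈ s2, f i • k i
        = (∑ i ∈ s2, f i • eta 𝒜 P ℳ A₀ i.1 i.2)
          - ∑ i ∈ s2, f i • σE (hhat 𝒜 ℳ A₀ (σ := σ) hA₀ hsupp (eta 𝒜 P ℳ A₀ i.1 i.2)) := by
      rw [← Finset.sum_sub_distrib]
      exact Finset.sum_congr rfl (fun i _ => by rw [hkdef, smul_sub])
    have e4 : ∑ i ∈ s2, f i • σE (hhat 𝒜 ℳ A₀ (σ := σ) hA₀ hsupp (eta 𝒜 P ℳ A₀ i.1 i.2))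
        = σE (hhat 𝒜 ℳ A₀ (σ := σ) hA₀ hsupp z) := by
      rw [hz3', map_sum, map_sum]
      exact Finset.sum_congr rfl (fun i _ => by rw [map_smul, map_smul])
    rw [e3, e4, hz, map_zero, sub_zero, ← hz3']
  -- decompose each kernel element
  have hkdec : ∀ i : Idx 𝒜 P ℳ A₀, ∃ (s : Finset ℤ) (cz : ℤ → Ehat 𝒜 P ℳ A₀),
      (∀ n, cz n ∈ Edeg 𝒜 P ℳ A₀ n) ∧
      (∀ n, hhat 𝒜 ℳ A₀ (σ := σ) hA₀ hsupp (cz n) = 0) ∧ k i = ∑ n ∈ s, cz n :=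
    fun i => ker_decomp 𝒜 ℳ A₀ hA₀ hsupp (k i) (hk0 i)
  choose sfun cfun hc1 hc2 hc3 using hkdec
  have hmin : ∀ (i : Idx 𝒜 P ℳ A₀) (m : ℤ), m < nm → cfun i m = 0 := by
    intro i m hm
    by_contra hne
    have : Pred m := ⟨cfun i m, hc2 i m, hc1 i m, hne⟩
    have := hleast m this
    omega
  -- z lies in higher degrees
  have hhigh : z ∈ ⨆ n' : {n' : ℤ // nm < n'}, Edeg 𝒜 P ℳ A₀ n'.1 := by
    rw [hzk]
    refine sum_mem (fun i hi => ?_)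
    rw [hc3 i, Finset.smul_sum]
    refine sum_mem (fun m _ => ?_)
    rcases lt_or_ge m nm with h | h
    · rw [hmin i m h, smul_zero]
      exact zero_mem _
    · refine le_iSup (fun n' : {n' : ℤ // nm < n'} => Edeg 𝒜 P ℳ A₀ n'.1)
        ⟨m + (nm - i.1), by have := hs2deg i hi; omega⟩ ?_
      exact smul_Edeg 𝒜 ℳ A₀ (hf i) (hc1 i m)
  exact hzne (indep 𝒜 ℳ A₀ hA₀ (⟨f, hf, hfz⟩ : z ∈ Edeg 𝒜 P ℳ A₀ nm) hhigh)

end sec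

-- ==================== chunk 6a: homogenization ====================

section homog
variable {A : Type u} [Ring A] (𝒜 : ℤ → AddSubgroup A) [GradedRing 𝒜]
variable {P : Type u} [AddCommGroup P] [Module A P] (ℳ : ℤ → AddSubgroup P)
  [DirectSum.Decomposition ℳ] [SetLike.GradedSMul 𝒜 ℳ]
variable {E : Type u} [AddCommGroup E] [Module A E] (ℰ : ℤ → AddSubgroup E)
  [DirectSum.Decomposition ℰ] [SetLike.GradedSMul 𝒜 ℰ]
variable (L : E →ₗ[A] P)

/-- the homogenized additive map -/
noncomputable def homogFun (z : E) : P :=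
  (DFinsupp.sumAddHom (fun n => (dcompHom ℳ n).comp
    (L.toAddMonoidHom.comp (ℰ n).subtype))) (DirectSum.decompose ℰ z)

lemma homogFun_add (x y : E) :
    homogFun ℳ ℰ L (x + y) = homogFun ℳ ℰ L x + homogFun ℳ ℰ L y := by
  unfold homogFun
  rw [DirectSum.decompose_add, map_add]

lemma homogFun_zero : homogFun ℳ ℰ L 0 = 0 := by
  unfold homogFun
  rw [DirectSum.decompose_zero, map_zero]

lemma homogFun_of_mem {k : ℤ} {z : E} (hz : z ∈ ℰ k) :
    homogFun ℳ ℰ L z = dcomp ℳ k (L z) := by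
  unfold homogFun
  rw [DirectSum.decompose_of_mem ℰ hz,
    show (DirectSum.of (fun i => ↥(ℰ i)) k ⟨z, hz⟩) = DFinsupp.single k ⟨z, hz⟩ from rfl,
    DFinsupp.sumAddHom_single]
  rfl

lemma homogFun_smul_homogeneous {m : ℤ} {a : A} (ha : a ∈ 𝒜 m) (z : E) :
    homogFun ℳ ℰ L (a • z) = a • homogFun ℳ ℰ L z := by
  induction z using DirectSum.Decomposition.inductionOn ℰ with
  | zero => rw [smul_zero, homogFun_zero, smul_zero]
  | @homogeneous j y =>
    have h1 : a • (y : E) ∈ ℰ (m + j) := hsmM 𝒜 ℰ ha y.2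
    rw [homogFun_of_mem ℳ ℰ L h1, homogFun_of_mem ℳ ℰ L y.2, map_smul,
      dcomp_smul 𝒜 ℳ (hsmM 𝒜 ℳ) ha, show m + j - m = j by ring]
  | add y z hy hz => rw [smul_add, homogFun_add, hy, hz, homogFun_add, smul_add]

/-- `homogFun` as an additive hom -/
noncomputable def homogFunHom : E →+ P := AddMonoidHom.mk' (homogFun ℳ ℰ L) (homogFun_add ℳ ℰ L)

include 𝒜 in
lemma homogFun_smul (a : A) (z : E) :
    homogFun ℳ ℰ L (a • z) = a • homogFun ℳ ℰ L z := by
  obtain ⟨s, hs0, hsum⟩ := dcomp_finsum 𝒜 a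
  conv_lhs => rw [hsum]
  conv_rhs => rw [hsum]
  rw [Finset.sum_smul, Finset.sum_smul,
    show homogFun ℳ ℰ L (∑ m ∈ s, dcomp 𝒜 m a • z)
      = ∑ m ∈ s, homogFun ℳ ℰ L (dcomp 𝒜 m a • z) from map_sum (homogFunHom ℳ ℰ L) _ s]
  exact Finset.sum_congr rfl (fun m _ =>
    homogFun_smul_homogeneous 𝒜 ℳ ℰ L (dcomp_mem 𝒜 m a) z)

/-- the homogenized linear map -/
noncomputable def homog : E →ₗ[A] P where
  toFun := homogFun ℳ ℰ L
  map_add' := homogFun_add ℳ ℰ L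
  map_smul' := homogFun_smul 𝒜 ℳ ℰ L

lemma homog_of_mem {k : ℤ} {z : E} (hz : z ∈ ℰ k) :
    homog 𝒜 ℳ ℰ L z = dcomp ℳ k (L z) := homogFun_of_mem ℳ ℰ L hz

/-- commutation of components with a graded map -/
lemma dcomp_map (hL : ∀ (n : ℤ) (z : E), z ∈ ℰ n → L z ∈ ℳ n) (n : ℤ) (z : E) :
    dcomp ℳ n (L z) = L (dcomp ℰ n z) := by
  induction z using DirectSum.Decomposition.inductionOn ℰ with
  | zero => rw [map_zero, dcomp_zero, dcomp_zero, map_zero]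
  | @homogeneous j y =>
    by_cases h : j = n
    · subst h
      rw [dcomp_of_mem_same ℳ (hL j (y : E) y.2), dcomp_of_mem_same ℰ y.2]
    · rw [dcomp_of_mem_ne ℳ (hL j (y : E) y.2) h, dcomp_of_mem_ne ℰ y.2 h, map_zero]
  | add y z hy hz => rw [map_add, dcomp_add, dcomp_add, map_add, hy, hz]

end homog
end FiltIso


open FiltIso

/-- Let `A` be an `ℕ`-graded ring with degree-zero subring `A₀`, `P` a finitely generated
`ℤ`-graded projective `A`-module, `T(P) = P/P·A₊`. For each `λ ∈ ℤ` there is an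
isomorphism of graded `A`-modules `F^λP ≅ ⊕_{κ ≤ λ} T(P)_κ ⊗_{A₀} A(−κ)`. Here the
right-hand side is encoded by any graded `A`-module `E` equipped with `A₀`-linear maps
`ι κ : T(P)_κ → E` landing in degree `κ` (the image of `x ⊗ 1`, matching the shift
`A(−κ)`) and satisfying the universal property of the direct sum of base changes; `F^λP`
is the `A`-submodule generated by homogeneous elements of degree `≤ λ`. -/
theorem filtration_iso (A : Type u) [Ring A] (𝒜 : ℤ → AddSubgroup A)
    [GradedRing 𝒜] (hsupp : ∀ n : ℤ, n < 0 → 𝒜 n = ⊥)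
    (A₀ : Subring A) (hA₀ : (A₀ : Set A) = (𝒜 0 : Set A))
    (P : Type u) [AddCommGroup P] [Module A P] (ℳ : ℤ → AddSubgroup P)
    [DirectSum.Decomposition ℳ] [SetLike.GradedSMul 𝒜 ℳ]
    [Module.Finite A P] [Module.Projective A P] (lam : ℤ)
    (E : Type u) [AddCommGroup E] [Module A E] (ℰ : ℤ → AddSubgroup E)
    [DirectSum.Decomposition ℰ] [SetLike.GradedSMul 𝒜 ℰ]
    (ι : ∀ κ : {κ : ℤ // κ ≤ lam}, (TSub 𝒜 A₀ P ℳ κ.1) →ₗ[A₀] E)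
    (hι : ∀ (κ : {κ : ℤ // κ ≤ lam}) (x : TSub 𝒜 A₀ P ℳ κ.1), ι κ x ∈ ℰ κ.1)
    (hE : ∀ (N : Type u) [AddCommGroup N] [Module A N]
      (f : ∀ κ : {κ : ℤ // κ ≤ lam}, (TSub 𝒜 A₀ P ℳ κ.1) →ₗ[A₀] N),
      ∃! F : E →ₗ[A] N, ∀ (κ : {κ : ℤ // κ ≤ lam}) (x : TSub 𝒜 A₀ P ℳ κ.1),
        F (ι κ x) = f κ x) :
    ∃ e : E →ₗ[A] P, Function.Injective e ∧
      LinearMap.range e = Submodule.span A {x : P | ∃ ω ≤ lam, x ∈ ℳ ω} ∧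
      ∀ n : ℤ, (ℰ n).map e.toAddMonoidHom =
        ℳ n ⊓ (Submodule.span A {x : P | ∃ ω ≤ lam, x ∈ ℳ ω}).toAddSubgroup := by
  classical
  obtain ⟨σ, hσ⟩ := Module.Projective.out (R := A) (P := P)
  have hσ' : ∀ p : P, Finsupp.linearCombination A (id : P → P) (σ p) = p := hσ
  obtain ⟨Ψ, hΨ, _⟩ := hE (Ehat 𝒜 P ℳ A₀) (fun κ => etaLin 𝒜 P ℳ A₀ κ.1)
  set e : E →ₗ[A] P := (hhat 𝒜 ℳ A₀ (σ := σ) hA₀ hsupp) ∘ₗ Ψ with he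
  have he_ι : ∀ (κ : {κ : ℤ // κ ≤ lam}) (x : TSub 𝒜 A₀ P ℳ κ.1),
      e (ι κ x) = sbar 𝒜 ℳ A₀ σ hA₀ hsupp κ.1 (x : P ⧸ posSMulSubmodule 𝒜 P) := by
    intro κ x
    rw [he, LinearMap.comp_apply, hΨ κ x]
    exact hhat_eta 𝒜 ℳ A₀ hA₀ hsupp κ.1 x
  -- injectivity
  have hΦΨ : ∀ z : E, elift 𝒜 ℳ A₀
      (fun κ => if h : κ ≤ lam then ι ⟨κ, h⟩ else 0) (Ψ z) = z := by
    obtain ⟨G, hG, hGuniq⟩ := hE E ι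
    have h1 : (elift 𝒜 ℳ A₀ (fun κ => if h : κ ≤ lam then ι ⟨κ, h⟩ else 0)) ∘ₗ Ψ = G := by
      refine hGuniq _ (fun κ x => ?_)
      rw [LinearMap.comp_apply, hΨ κ x,
        show (etaLin 𝒜 P ℳ A₀ κ.1 x : Ehat 𝒜 P ℳ A₀) = eta 𝒜 P ℳ A₀ κ.1 x from rfl,
        elift_eta 𝒜 ℳ A₀ _ κ.1 x, dif_pos κ.2]
    have h2 : LinearMap.id = G := hGuniq _ (fun κ x => rfl)
    intro z
    have := LinearMap.ext_iff.mp (h1.trans h2.symm) z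
    simpa using this
  have hΨinj : Function.Injective Ψ := fun a b hab => by
    rw [← hΦΨ a, ← hΦΨ b, hab]
  have hinj : Function.Injective e := fun a b hab =>
    hΨinj ((hhat_inj 𝒜 ℳ A₀ hσ' hA₀ hsupp) hab)
  -- range
  have hrange : LinearMap.range e = Submodule.span A {x : P | ∃ ω ≤ lam, x ∈ ℳ ω} := by
    refine le_antisymm ?_ ?_
    · set V : Submodule A E := Submodule.span A
        {y : E | ∃ (κ : {κ : ℤ // κ ≤ lam}) (x : TSub 𝒜 A₀ P ℳ κ.1), ι κ x = y} with hVdef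
      have hV : V = ⊤ := by
        obtain ⟨G0, hG0, hG0u⟩ := hE (E ⧸ V) (fun κ => 0)
        have hmk : V.mkQ = G0 := by
          refine hG0u _ (fun κ x => ?_)
          rw [LinearMap.zero_apply, Submodule.mkQ_apply, Submodule.Quotient.mk_eq_zero]
          exact Submodule.subset_span ⟨κ, x, rfl⟩
        have h0 : (0 : E →ₗ[A] E ⧸ V) = G0 := hG0u _ (fun κ x => rfl)
        have hzero : V.mkQ = 0 := hmk.trans h0.symm
        rw [← Submodule.ker_mkQ V, hzero]
        exact LinearMap.ker_zero
      have h3 : LinearMap.range e = Submodule.map e V := by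
        rw [hV, LinearMap.range_eq_map]
      rw [h3, hVdef, Submodule.map_span, Submodule.span_le]
      rintro y ⟨y', ⟨κ, x, rfl⟩, rfl⟩
      refine Submodule.subset_span ⟨κ.1, κ.2, ?_⟩
      rw [he_ι κ x]
      exact sbar_mem 𝒜 ℳ A₀ (σ := σ) hA₀ hsupp κ.1 _
    · rw [Submodule.span_le]
      rintro p ⟨ω, hω, hp⟩
      exact main_induction 𝒜 ℳ A₀ hσ' hA₀ hsupp (LinearMap.range e) (fun n => n ≤ lam)
        (fun {i j} hij hcj => le_trans hij hcj)
        (fun ω' hω' p' hp' =>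
          ⟨ι ⟨ω', hω'⟩ ⟨Submodule.Quotient.mk p', mk_mem_TSub 𝒜 ℳ A₀ hp'⟩, he_ι ⟨ω', hω'⟩ _⟩)
        ω hω p hp
  -- gradedness
  have e_graded : ∀ (n : ℤ) (z : E), z ∈ ℰ n → e z ∈ ℳ n := by
    obtain ⟨G1, hG1, hG1u⟩ := hE P
      (fun κ => (sbar 𝒜 ℳ A₀ σ hA₀ hsupp κ.1).comp (TSub 𝒜 A₀ P ℳ κ.1).subtype)
    have h1 : e = G1 := hG1u _ (fun κ x => he_ι κ x)
    have h2 : homog 𝒜 ℳ ℰ e = G1 := by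
      refine hG1u _ (fun κ x => ?_)
      rw [homog_of_mem 𝒜 ℳ ℰ e (hι κ x), he_ι κ x]
      exact dcomp_of_mem_same ℳ (sbar_mem 𝒜 ℳ A₀ (σ := σ) hA₀ hsupp κ.1 _)
    intro n z hz
    have h4 : e z = dcomp ℳ n (e z) := by
      conv_lhs => rw [h1, ← h2]
      exact homog_of_mem 𝒜 ℳ ℰ e hz
    rw [h4]
    exact dcomp_mem ℳ n (e z)
  refine ⟨e, hinj, hrange, fun n => ?_⟩
  ext y
  rw [AddSubgroup.mem_map]
  constructor
  · rintro ⟨z, hz, rfl⟩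
    rw [AddSubgroup.mem_inf]
    refine ⟨e_graded n z hz, ?_⟩
    rw [Submodule.mem_toAddSubgroup, ← hrange]
    exact ⟨z, rfl⟩
  · intro hy
    rw [AddSubgroup.mem_inf, Submodule.mem_toAddSubgroup, ← hrange] at hy
    obtain ⟨hy1, hy2⟩ := hy
    obtain ⟨z, rfl⟩ := hy2
    refine ⟨dcomp ℰ n z, dcomp_mem ℰ n z, ?_⟩
    show e (dcomp ℰ n z) = e z
    rw [← dcomp_map ℳ ℰ e e_graded n z]
    exact dcomp_of_mem_same ℳ hy1
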